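/- If w_i = Σ_j A_{ij} u_j for an invertible g×g matrix A over ℂ, then the wedge of all degree-n symmetrized monomials in the w's equals (det A)^{C(g+n-1,n-1)} times the wedge of the corresponding symmetrized monomials in the u's. -/

import Mathlib

open MvPolynomial Matrix


namespace Stmt2

noncomputable section

variable {gg : ℕ}

/-- weighted degree -/
def wdeg (f : Fin gg → ℕ) (m : Fin gg →₀ ℕ) : ℕ := ∑ a, f a * m a

lemma wdeg_add (f : Fin gg → ℕ) (m m' : Fin gg →₀ ℕ) :
    wdeg f (m + m') = wdeg f m + wdeg f m' := by
  simp [wdeg, mul_add, Finset.sum_add_distrib]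

lemma wdeg_single (f : Fin gg → ℕ) (j : Fin gg) (k : ℕ) :
    wdeg f (Finsupp.single j k) = f j * k := by
  simp [wdeg, Finsupp.single_apply, mul_ite, Finset.sum_ite_eq]

/-- `p` equals `c • X^D` plus terms of weight `< t`, with `wdeg D = t`. -/
def Pred (f : Fin gg → ℕ) (t : ℕ) (D : Fin gg →₀ ℕ) (c : ℂ)
    (p : MvPolynomial (Fin gg) ℂ) : Prop :=
  wdeg f D = t ∧ ∀ m, t ≤ wdeg f m → coeff m p = if m = D then c else 0

lemma Pred.one (f : Fin gg → ℕ) : Pred f 0 0 1 (1 : MvPolynomial (Fin gg) ℂ) := by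
  refine ⟨by simp [wdeg], fun m _ => ?_⟩
  rw [MvPolynomial.coeff_one]
  simp [eq_comm]

lemma Pred.of_eq {f : Fin gg → ℕ} {t t' : ℕ} {D D' : Fin gg →₀ ℕ} {c c' : ℂ}
    {p : MvPolynomial (Fin gg) ℂ} (h : Pred f t D c p)
    (h1 : t = t') (h2 : D = D') (h3 : c = c') : Pred f t' D' c' p := by
  subst h1; subst h2; subst h3; exact h

lemma Pred.mul {f : Fin gg → ℕ} {t s : ℕ} {D E : Fin gg →₀ ℕ} {c d : ℂ}
    {p q : MvPolynomial (Fin gg) ℂ} (hp : Pred f t D c p) (hq : Pred f s E d q) :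
    Pred f (t + s) (D + E) (c * d) (p * q) := by
  obtain ⟨hD, hp⟩ := hp
  obtain ⟨hE, hq⟩ := hq
  refine ⟨by rw [wdeg_add, hD, hE], fun m hm => ?_⟩
  rw [MvPolynomial.coeff_mul]
  have key : ∀ x ∈ Finset.HasAntidiagonal.antidiagonal m, coeff x.1 p * coeff x.2 q
      = if x = (D, E) then c * d else 0 := by
    rintro ⟨u, v⟩ hx
    rw [Finset.HasAntidiagonal.mem_antidiagonal] at hx
    have hsum : wdeg f u + wdeg f v = wdeg f m := by rw [← wdeg_add, hx]
    by_cases hu : t ≤ wdeg f u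
    · rw [hp u hu]
      by_cases huD : u = D
      · subst huD
        have hv : s ≤ wdeg f v := by omega
        rw [hq v hv]
        by_cases hvE : v = E
        · subst hvE; simp
        · simp [hvE]
      · simp [huD]
    · have hv : s ≤ wdeg f v := by omega
      rw [hq v hv]
      by_cases hvE : v = E
      · exfalso; subst hvE; omega
      · simp [hvE]
  rw [Finset.sum_congr rfl key, Finset.sum_ite_eq' (Finset.HasAntidiagonal.antidiagonal m) (D, E)]
  by_cases hm' : m = D + E
  · rw [if_pos (by rw [Finset.HasAntidiagonal.mem_antidiagonal, hm']), if_pos hm']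
  · rw [if_neg (by rw [Finset.HasAntidiagonal.mem_antidiagonal]; exact fun h => hm' h.symm), if_neg hm']

lemma Pred.pow {f : Fin gg → ℕ} {t : ℕ} {D : Fin gg →₀ ℕ} {c : ℂ}
    {p : MvPolynomial (Fin gg) ℂ} (hp : Pred f t D c p) (k : ℕ) :
    Pred f (k * t) (k • D) (c ^ k) (p ^ k) := by
  induction k with
  | zero => simpa using Pred.one f
  | succ k ih =>
      have := ih.mul hp
      rw [pow_succ, pow_succ]
      exact (ih.mul hp).of_eq (by ring) (by rw [succ_nsmul]) rfl

lemma Pred.prod {α : Type*} {f : Fin gg → ℕ} {s : Finset α} {t : α → ℕ}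
    {D : α → (Fin gg →₀ ℕ)} {c : α → ℂ} {p : α → MvPolynomial (Fin gg) ℂ}
    (h : ∀ a ∈ s, Pred f (t a) (D a) (c a) (p a)) :
    Pred f (∑ a ∈ s, t a) (∑ a ∈ s, D a) (∏ a ∈ s, c a) (∏ a ∈ s, p a) := by
  classical
  induction s using Finset.induction with
  | empty => simpa using Pred.one f
  | @insert x s hx ih =>
      rw [Finset.sum_insert hx, Finset.sum_insert hx, Finset.prod_insert hx,
        Finset.prod_insert hx]
      exact (h x (Finset.mem_insert_self _ _)).mul
        (ih fun a ha => h a (Finset.mem_insert_of_mem ha))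

lemma Pred.linear {f : Fin gg → ℕ} (hf : Function.Injective f)
    (A : Matrix (Fin gg) (Fin gg) ℂ)
    (htri : ∀ a b, f a < f b → A a b = 0) (j : Fin gg) :
    Pred f (f j) (Finsupp.single j 1) (A j j)
      (∑ k, A j k • (X k : MvPolynomial (Fin gg) ℂ)) := by
  refine ⟨by simp [wdeg_single], fun m hm => ?_⟩
  rw [MvPolynomial.coeff_sum]
  have hterm : ∀ k, coeff m (A j k • (X k : MvPolynomial (Fin gg) ℂ))
      = if Finsupp.single k 1 = m then A j k else 0 := by
    intro k
    rw [MvPolynomial.coeff_smul, MvPolynomial.coeff_X']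
    simp [mul_ite]
  rw [Finset.sum_congr rfl fun k _ => hterm k]
  by_cases hm' : m = Finsupp.single j 1
  · subst hm'
    rw [Finset.sum_eq_single j (fun k _ hk => if_neg (fun h =>
      hk (by simpa [Finsupp.single_left_inj (one_ne_zero : (1:ℕ) ≠ 0)] using h)))
      (fun h => absurd (Finset.mem_univ j) h)]
  · rw [if_neg hm', Finset.sum_eq_zero]
    intro k _
    by_cases hk : Finsupp.single k 1 = m
    · rw [if_pos hk]
      subst hk
      have hkj : k ≠ j := fun h => hm' (by rw [h])
      have : f j < f k := by
        rcases lt_or_ge (f j) (f k) with h | h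
        · exact h
        · rcases lt_or_eq_of_le h with h | h
          · exfalso
            have := hm
            rw [wdeg_single, mul_one] at this
            omega
          · exact absurd (hf h.symm).symm hkj
      exact htri j k this
    · rw [if_neg hk]

end

end Stmt2


namespace Stmt2b

/-- Alternating maps and linear combinations: the determinant appears. -/
theorem alt_comb {m : ℕ} {M N : Type*} [AddCommGroup M] [Module ℂ M]
    [AddCommGroup N] [Module ℂ N] (f : M [⋀^Fin m]→ₗ[ℂ] N)
    (B : Matrix (Fin m) (Fin m) ℂ) (v : Fin m → M) :
    f (fun i => ∑ j, B i j • v j) = B.det • f v := by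
  classical
  have h0 : (f fun i => ∑ j, B i j • v j)
      = ∑ r : Fin m → Fin m, f fun i => B i (r i) • v (r i) :=
    f.toMultilinearMap.map_sum (g := fun i j => B i j • v j)
  have h1 : ∀ r : Fin m → Fin m, (f fun i => B i (r i) • v (r i))
      = (∏ i, B i (r i)) • f (v ∘ r) := fun r =>
    f.toMultilinearMap.map_smul_univ (fun i => B i (r i)) (fun i => v (r i))
  rw [h0, Finset.sum_congr rfl fun r _ => h1 r]
  rw [← Finset.sum_filter_add_sum_filter_not Finset.univ (fun r => Function.Injective r)]
  have h2 : ∑ r ∈ Finset.univ.filter (fun r : Fin m → Fin m => ¬ Function.Injective r),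
      (∏ i, B i (r i)) • f (v ∘ r) = 0 := by
    refine Finset.sum_eq_zero fun r hr => ?_
    rw [Finset.mem_filter] at hr
    have : ¬ Function.Injective (v ∘ r) := by
      intro h
      exact hr.2 fun a b hab => h (by simp [Function.comp, hab])
    rw [f.map_eq_zero_of_not_injective _ this, smul_zero]
  rw [h2, add_zero]
  have h3 : ∑ r ∈ Finset.univ.filter (fun r : Fin m → Fin m => Function.Injective r),
      (∏ i, B i (r i)) • f (v ∘ r)
      = ∑ σ : Equiv.Perm (Fin m), (∏ i, B i (σ i)) • f (v ∘ σ) := by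
    refine (Finset.sum_bij' (fun (σ : Equiv.Perm (Fin m)) _ => (σ : Fin m → Fin m))
      (fun r hr => Equiv.ofBijective r (Finite.injective_iff_bijective.1
        (Finset.mem_filter.1 hr).2)) ?_ ?_ ?_ ?_ ?_).symm
    · intro σ _
      simp [Equiv.injective σ]
    · intro r hr
      exact Finset.mem_univ _
    · intro σ _
      ext x
      rfl
    · intro r hr
      rfl
    · intro σ _
      rfl
  rw [h3]
  have h4 : ∀ σ : Equiv.Perm (Fin m), (∏ i, B i (σ i)) • f (v ∘ σ)
      = ((Equiv.Perm.sign σ : ℂ) * ∏ i, B i (σ i)) • f v := by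
    intro σ
    rw [f.map_perm v σ, Units.smul_def, ← Int.cast_smul_eq_zsmul ℂ, smul_smul, mul_comm]
  rw [Finset.sum_congr rfl fun σ _ => h4 σ, ← Finset.sum_smul]
  congr 1
  rw [← Matrix.det_transpose, Matrix.det_apply']
  simp [Matrix.transpose_apply]

/-- Determinant of a "triangular with respect to a weight" matrix. -/
theorem det_tri {m : ℕ} (M : Matrix (Fin m) (Fin m) ℂ) (key : Fin m → ℕ)
    (hkey : ∀ i j, M i j ≠ 0 → i = j ∨ key j < key i) :
    M.det = ∏ i, M i i := by
  classical
  set π := Tuple.sort key with hπ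
  have hmono : Monotone (key ∘ π) := Tuple.monotone_sort key
  have hdet : (M.submatrix π π).det = M.det := Matrix.det_submatrix_equiv_self π M
  have htri : (M.submatrix π π).BlockTriangular OrderDual.toDual := by
    intro i j hij
    have hij' : (i : Fin m) < j := hij
    by_contra hne
    rcases hkey (π i) (π j) hne with h | h
    · exact absurd (π.injective h) (ne_of_lt hij')
    · exact absurd (hmono (le_of_lt hij')) (not_le.2 h)
  calc M.det = (M.submatrix π π).det := hdet.symm
    _ = ∏ i, (M.submatrix π π) i i := Matrix.det_of_lowerTriangular _ htri
    _ = ∏ i, M (π i) (π i) := rfl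
    _ = ∏ i, M i i := Equiv.prod_comp π (fun i => M i i)

end Stmt2b


namespace Stmt2c

noncomputable section

variable {g n N : ℕ}

def toF {g : ℕ} (m : Fin g → ℕ) : Fin g →₀ ℕ := Finsupp.equivFunOnFinite.symm m

@[simp] lemma toF_apply (m : Fin g → ℕ) (a : Fin g) : toF m a = m a := rfl

lemma toF_inj : Function.Injective (toF (g := g)) := Finsupp.equivFunOnFinite.symm.injective

lemma degree_eq_sum (m : Fin g →₀ ℕ) : m.degree = ∑ j, m j := by
  rw [Finsupp.degree]
  refine Finset.sum_subset (Finset.subset_univ _) ?_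
  intro x _ hx
  simpa using Finsupp.notMem_support_iff.1 hx

def uu (d : Fin N → Fin g → ℕ) (i : Fin N) : MvPolynomial (Fin g) ℂ :=
  monomial (toF (d i)) 1

def σA (A : Matrix (Fin g) (Fin g) ℂ) :
    MvPolynomial (Fin g) ℂ →ₐ[ℂ] MvPolynomial (Fin g) ℂ :=
  aeval fun j => ∑ k, A j k • X k

def Φ (d : Fin N → Fin g → ℕ) (A : Matrix (Fin g) (Fin g) ℂ) :
    Matrix (Fin N) (Fin N) ℂ :=
  fun i i' => coeff (toF (d i')) (σA A (uu d i))

lemma uu_eq_prod (d : Fin N → Fin g → ℕ) (i : Fin N) :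
    uu d i = ∏ j, (X j : MvPolynomial (Fin g) ℂ) ^ d i j := by
  have h := prod_X_pow_eq_monomial (s := toF (d i)) (R := ℂ)
  show monomial (toF (d i)) (1:ℂ) = _
  rw [← h]
  refine Finset.prod_subset (Finset.subset_univ _) ?_
  intro x _ hx
  have : toF (d i) x = 0 := Finsupp.notMem_support_iff.1 hx
  simp_all

lemma sigma_uu (A : Matrix (Fin g) (Fin g) ℂ) (d : Fin N → Fin g → ℕ) (i : Fin N) :
    σA A (uu d i) = ∏ j, (∑ k, A j k • (X k : MvPolynomial (Fin g) ℂ)) ^ d i j := by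
  rw [uu_eq_prod, map_prod]
  simp [σA]

lemma homog (A : Matrix (Fin g) (Fin g) ℂ) (d : Fin N → Fin g → ℕ)
    (hd : ∀ i, ∑ j, d i j = n) (i : Fin N) :
    (σA A (uu d i)).IsHomogeneous n := by
  rw [sigma_uu]
  have := IsHomogeneous.prod Finset.univ
    (fun j => (∑ k, A j k • (X k : MvPolynomial (Fin g) ℂ)) ^ d i j)
    (fun j => d i j) (fun j _ => ?_)
  · simpa [hd i] using this
  · have h1 : (∑ k, A j k • (X k : MvPolynomial (Fin g) ℂ)).IsHomogeneous 1 := by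
      refine IsHomogeneous.sum Finset.univ _ 1 (fun k _ => ?_)
      rw [smul_eq_C_mul]
      exact isHomogeneous_C_mul_X _ _
    simpa using h1.pow (d i j)

lemma coeff_uu (d : Fin N → Fin g → ℕ) (i : Fin N) (m : Fin g →₀ ℕ) :
    coeff m (uu d i) = if toF (d i) = m then 1 else 0 := coeff_monomial m _ _

lemma coeff_sum_uu (hdinj : Function.Injective d) (c : Fin N → ℂ) (i' : Fin N) :
    coeff (toF (d i')) (∑ i'', c i'' • uu d i'') = c i' := by
  rw [coeff_sum]
  rw [Finset.sum_eq_single i' (fun i'' _ hne => ?_) (fun h => absurd (Finset.mem_univ i') h)]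
  · rw [coeff_smul, coeff_uu, if_pos rfl, smul_eq_mul, mul_one]
  · rw [coeff_smul, coeff_uu, if_neg, smul_eq_mul, mul_zero]
    exact fun h => hne (hdinj (toF_inj h))

lemma expansion (A : Matrix (Fin g) (Fin g) ℂ) (d : Fin N → Fin g → ℕ)
    (hdinj : Function.Injective d) (hd : ∀ i, ∑ j, d i j = n)
    (hsurj : ∀ m : Fin g → ℕ, (∑ j, m j = n) → ∃ i, d i = m) (i : Fin N) :
    σA A (uu d i) = ∑ i', Φ d A i i' • uu d i' := by
  apply MvPolynomial.ext
  intro m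
  rw [coeff_sum]
  by_cases hm : ∑ j, m j = n
  · obtain ⟨i0, hi0⟩ := hsurj ⇑m hm
    have hm0 : toF (d i0) = m := by
      rw [hi0]
      exact Finsupp.equivFunOnFinite.symm_apply_apply m
    rw [Finset.sum_eq_single i0 (fun i'' _ hne => ?_) (fun h => absurd (Finset.mem_univ i0) h)]
    · rw [coeff_smul, coeff_uu, if_pos hm0, smul_eq_mul, mul_one, Φ, hm0]
    · rw [coeff_smul, coeff_uu, if_neg, smul_eq_mul, mul_zero]
      rw [← hm0]
      exact fun h => hne (hdinj (toF_inj h))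
  · rw [(homog A d hd i).coeff_eq_zero (by rw [degree_eq_sum]; exact hm),
      Finset.sum_eq_zero]
    intro i'' _
    rw [coeff_smul, coeff_uu, if_neg, smul_eq_mul, mul_zero]
    intro h
    apply hm
    have := congrArg Finsupp.degree h
    rw [degree_eq_sum, degree_eq_sum] at this
    rw [← this]
    simpa using hd i''

lemma sigma_one : σA (1 : Matrix (Fin g) (Fin g) ℂ) = AlgHom.id ℂ _ := by
  apply MvPolynomial.algHom_ext
  intro j
  simp only [σA, aeval_X, AlgHom.coe_id, id_eq]
  rw [Finset.sum_eq_single j (fun k _ hk => ?_) (fun h => absurd (Finset.mem_univ j) h)]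
  · rw [Matrix.one_apply_eq, one_smul]
  · rw [Matrix.one_apply_ne (Ne.symm hk), zero_smul]

lemma sigma_X (A : Matrix (Fin g) (Fin g) ℂ) (j : Fin g) :
    σA A (X j) = ∑ k, A j k • X k := by simp [σA]

lemma sigma_comp (A B : Matrix (Fin g) (Fin g) ℂ) :
    (σA A).comp (σA B) = σA (B * A) := by
  apply MvPolynomial.algHom_ext
  intro j
  rw [AlgHom.comp_apply, sigma_X, sigma_X, map_sum]
  have : ∀ k, σA A (B j k • (X k : MvPolynomial (Fin g) ℂ))
      = ∑ l, (B j k * A k l) • X l := by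
    intro k
    rw [_root_.map_smul, sigma_X, Finset.smul_sum]
    exact Finset.sum_congr rfl fun l _ => (smul_smul _ _ _)
  rw [Finset.sum_congr rfl fun k _ => this k, Finset.sum_comm]
  refine Finset.sum_congr rfl fun l _ => ?_
  rw [Matrix.mul_apply, Finset.sum_smul]

lemma phi_one (d : Fin N → Fin g → ℕ) (hdinj : Function.Injective d) :
    Φ d (1 : Matrix (Fin g) (Fin g) ℂ) = 1 := by
  funext i i'
  rw [Φ, sigma_one]
  simp only [AlgHom.coe_id, id_eq]
  rw [coeff_uu]
  by_cases h : i = i'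
  · subst h; rw [if_pos rfl, Matrix.one_apply_eq]
  · rw [if_neg (fun hh => h (hdinj (toF_inj hh))), Matrix.one_apply_ne h]

lemma phi_mul (A B : Matrix (Fin g) (Fin g) ℂ) (d : Fin N → Fin g → ℕ)
    (hdinj : Function.Injective d) (hd : ∀ i, ∑ j, d i j = n)
    (hsurj : ∀ m : Fin g → ℕ, (∑ j, m j = n) → ∃ i, d i = m) :
    Φ d (B * A) = Φ d B * Φ d A := by
  funext i i'
  have h1 : σA (B * A) (uu d i) = σA A (σA B (uu d i)) := by
    rw [← sigma_comp]; rfl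
  rw [Φ, h1, expansion (n := n) B d hdinj hd hsurj i, map_sum]
  have h2 : ∀ i'', σA A (Φ d B i i'' • uu d i'')
      = ∑ i3, (Φ d B i i'' * Φ d A i'' i3) • uu d i3 := by
    intro i''
    rw [_root_.map_smul, expansion (n := n) A d hdinj hd hsurj i'', Finset.smul_sum]
    exact Finset.sum_congr rfl fun i3 _ => smul_smul _ _ _
  rw [Finset.sum_congr rfl fun i'' _ => h2 i'', Finset.sum_comm]
  have h3 : ∀ i3, ∑ i'', (Φ d B i i'' * Φ d A i'' i3) • uu d i3
      = (∑ i'', Φ d B i i'' * Φ d A i'' i3) • uu d i3 := fun i3 =>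
    (Finset.sum_smul).symm
  rw [Finset.sum_congr rfl fun i3 _ => h3 i3, coeff_sum_uu hdinj]
  rfl

open Stmt2 Stmt2b in
lemma pred_phi {f : Fin g → ℕ} (hf : Function.Injective f)
    (A : Matrix (Fin g) (Fin g) ℂ) (htri : ∀ a b, f a < f b → A a b = 0)
    (d : Fin N → Fin g → ℕ) (i : Fin N) :
    Pred f (∑ j, d i j * f j) (toF (d i)) (∏ j, A j j ^ d i j) (σA A (uu d i)) := by
  rw [sigma_uu]
  have h := Pred.prod (s := (Finset.univ : Finset (Fin g)))
    (t := fun j => d i j * f j) (D := fun j => (d i j) • Finsupp.single j 1)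
    (c := fun j => A j j ^ d i j)
    (p := fun j => (∑ k, A j k • (X k : MvPolynomial (Fin g) ℂ)) ^ d i j)
    (fun j _ => ((Pred.linear hf A htri j).pow (d i j)).of_eq rfl rfl rfl)
  refine h.of_eq rfl ?_ rfl
  ext a
  rw [Finsupp.finset_sum_apply]
  simp [Finsupp.smul_apply, Finsupp.single_apply, mul_ite, Finset.sum_ite_eq]

open Stmt2 Stmt2b in
lemma det_phi_tri {Cn : ℕ} {f : Fin g → ℕ} (hf : Function.Injective f)
    (A : Matrix (Fin g) (Fin g) ℂ) (htri : ∀ a b, f a < f b → A a b = 0)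
    (d : Fin N → Fin g → ℕ) (hdinj : Function.Injective d)
    (hS : ∀ a, ∑ i, d i a = Cn) :
    (Φ d A).det = A.det ^ Cn := by
  have hP := pred_phi hf A htri d
  have hdiag : ∀ i, Φ d A i i = ∏ j, A j j ^ d i j := by
    intro i
    have h2 := (hP i).2 (toF (d i)) (le_of_eq (hP i).1.symm)
    rw [Φ, h2, if_pos rfl]
  have h1 : (Φ d A).det = ∏ i, Φ d A i i := by
    apply det_tri _ (fun i => wdeg f (toF (d i)))
    intro i i' hne
    by_cases hle : wdeg f (toF (d i)) ≤ wdeg f (toF (d i'))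
    · left
      have h2 := (hP i).2 (toF (d i')) (le_trans (le_of_eq (hP i).1.symm) hle)
      rw [Φ, h2] at hne
      by_cases heq : toF (d i') = toF (d i)
      · exact (hdinj (toF_inj heq)).symm
      · exact absurd rfl (by rwa [if_neg heq] at hne)
    · right; omega
  have hdetA : A.det = ∏ j, A j j := by
    apply det_tri A f
    intro a b hab
    by_cases h : a = b
    · exact Or.inl h
    · right
      rcases lt_trichotomy (f a) (f b) with h' | h' | h'
      · exact absurd (htri a b h') hab
      · exact absurd (hf h') h
      · exact h'
  rw [h1, Finset.prod_congr rfl (fun i _ => hdiag i), Finset.prod_comm, hdetA,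
    ← Finset.prod_pow]
  refine Finset.prod_congr rfl fun j _ => ?_
  rw [Finset.prod_pow_eq_pow_sum, hS j]

open Stmt2 Stmt2b in
lemma det_phi_diag {Cn : ℕ} (D : Fin g → ℂ) (d : Fin N → Fin g → ℕ)
    (hdinj : Function.Injective d) (hS : ∀ a, ∑ i, d i a = Cn) :
    (Φ d (Matrix.diagonal D)).det = (Matrix.diagonal D).det ^ Cn := by
  refine det_phi_tri (f := fun a => (a : ℕ)) (fun a b h => Fin.val_injective h)
    _ (fun a b hab => Matrix.diagonal_apply_ne D (fun h => by subst h; omega)) d hdinj hS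

open Stmt2 Stmt2b in
lemma det_phi_transvection {Cn : ℕ} (t : Matrix.TransvectionStruct (Fin g) ℂ)
    (d : Fin N → Fin g → ℕ)
    (hdinj : Function.Injective d) (hS : ∀ a, ∑ i, d i a = Cn) :
    (Φ d t.toMatrix).det = t.toMatrix.det ^ Cn := by
  set f : Fin g → ℕ := fun a => if a = t.j then 0 else (a : ℕ) + 1 with hfdef
  have hf : Function.Injective f := by
    intro a b hab
    simp only [f] at hab
    by_cases ha : a = t.j <;> by_cases hb : b = t.j <;> simp [ha, hb] at hab <;>
      first
        | (subst ha; subst hb; rfl)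
        | omega
        | exact Fin.val_injective hab
  refine det_phi_tri hf _ (fun a b hab => ?_) d hdinj hS
  have hne : a ≠ b := by rintro rfl; omega
  have hbj : b ≠ t.j := by
    rintro rfl
    simp only [f, if_pos rfl] at hab
    omega
  rcases t with ⟨ti, tj, hij, c⟩
  simp only [Matrix.TransvectionStruct.toMatrix_mk, Matrix.transvection,
    Matrix.add_apply, Matrix.smul_apply, Matrix.one_apply_ne hne,
    Matrix.single, Matrix.of_apply, smul_eq_mul]
  rw [if_neg (fun h => hbj h.2.symm)]
  simp

open Stmt2 Stmt2b in
lemma det_phi {Cn : ℕ} (A : Matrix (Fin g) (Fin g) ℂ) (d : Fin N → Fin g → ℕ)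
    (hdinj : Function.Injective d) (hd : ∀ i, ∑ j, d i j = n)
    (hsurj : ∀ m : Fin g → ℕ, (∑ j, m j = n) → ∃ i, d i = m)
    (hS : ∀ a, ∑ i, d i a = Cn) :
    (Φ d A).det = A.det ^ Cn := by
  have Pmul : ∀ X Y : Matrix (Fin g) (Fin g) ℂ,
      (Φ d X).det = X.det ^ Cn → (Φ d Y).det = Y.det ^ Cn →
      (Φ d (X * Y)).det = (X * Y).det ^ Cn := by
    intro X Y hX hY
    rw [phi_mul (n := n) Y X d hdinj hd hsurj, Matrix.det_mul, hX, hY,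
      Matrix.det_mul, mul_pow]
  have Plist : ∀ L : List (Matrix.TransvectionStruct (Fin g) ℂ),
      (Φ d (L.map Matrix.TransvectionStruct.toMatrix).prod).det
        = ((L.map Matrix.TransvectionStruct.toMatrix).prod).det ^ Cn := by
    intro L
    induction L with
    | nil =>
        simp [phi_one d hdinj]
    | cons t L ih =>
        rw [List.map_cons, List.prod_cons]
        exact Pmul _ _ (det_phi_transvection t d hdinj hS) ih
  obtain ⟨L, L', D, rfl⟩ := Matrix.Pivot.exists_list_transvec_mul_diagonal_mul_list_transvec A
  exact Pmul _ _ (Pmul _ _ (Plist L) (det_phi_diag D d hdinj hS)) (Plist L')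

end

end Stmt2c

namespace Stmt2d

lemma key_binom (g n : ℕ) (hg : 1 ≤ g) (hn : 1 ≤ n) :
    g * (g + n - 1).choose (n - 1) = n * (g + n - 1).choose n := by
  obtain ⟨g', rfl⟩ : ∃ g', g = g' + 1 := ⟨g - 1, by omega⟩
  obtain ⟨n', rfl⟩ : ∃ n', n = n' + 1 := ⟨n - 1, by omega⟩
  have hm : g' + 1 + (n' + 1) - 1 = g' + n' + 1 := by omega
  rw [hm]
  simp only [Nat.add_sub_cancel]
  have h1 : (g' + n' + 1) * (g' + n').choose g' = (g' + n' + 1).choose (g' + 1) * (g' + 1) :=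
    Nat.add_one_mul_choose_eq (g' + n') g'
  have h2 : (g' + n' + 1) * (g' + n').choose n' = (g' + n' + 1).choose (n' + 1) * (n' + 1) :=
    Nat.add_one_mul_choose_eq (g' + n') n'
  have h3 : (g' + n').choose g' = (g' + n').choose n' := Nat.choose_symm_add
  have h4 : (g' + n' + 1).choose (g' + 1) = (g' + n' + 1).choose n' := by
    have : g' + n' + 1 = (g' + 1) + n' := by omega
    rw [this, Nat.add_comm (g' + 1) n', Nat.choose_symm_add]
  rw [← h4]
  calc (g' + 1) * (g' + n' + 1).choose (g' + 1)
      = (g' + n' + 1).choose (g' + 1) * (g' + 1) := Nat.mul_comm _ _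
    _ = (g' + n' + 1) * (g' + n').choose g' := h1.symm
    _ = (g' + n' + 1) * (g' + n').choose n' := by rw [h3]
    _ = (g' + n' + 1).choose (n' + 1) * (n' + 1) := h2
    _ = (n' + 1) * (g' + n' + 1).choose (n' + 1) := Nat.mul_comm _ _

end Stmt2d


/-- Eq. (1.2): if `w_i = Σ_j A_{ij} u_j` for an invertible matrix `A`, with
`u_j = X_j` the variables (a basis of the `g`-dimensional space `V`), then the
wedge of all `M_n = C(g+n-1,n)` degree-`n` symmetrized monomials in the `w`'s
equals `(det A)^{C(g+n-1,n-1)}` times the wedge of the corresponding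
symmetrized monomials in the `u`'s.  The monomials of degree `n` are enumerated
by any bijection `e` from `Fin M_n` to the exponent vectors `d` with `Σ d = n`. -/
theorem stmt_2 (g n : ℕ) (hg : 1 ≤ g) (hn : 1 ≤ n)
    (A : Matrix (Fin g) (Fin g) ℂ) (hA : IsUnit A.det)
    (e : Fin ((g + n - 1).choose n) ≃ {d : Fin g → ℕ // ∑ j, d j = n}) :
    ExteriorAlgebra.ιMulti ℂ ((g + n - 1).choose n)
        (fun i => ∏ j, (∑ k, A j k • (X k : MvPolynomial (Fin g) ℂ)) ^ ((e i : Fin g → ℕ) j)) =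
      A.det ^ ((g + n - 1).choose (n - 1)) •
        ExteriorAlgebra.ιMulti ℂ ((g + n - 1).choose n)
          (fun i => ∏ j, (X j : MvPolynomial (Fin g) ℂ) ^ ((e i : Fin g → ℕ) j)) := by
  classical
  let d : Fin ((g + n - 1).choose n) → Fin g → ℕ := fun i => (e i : Fin g → ℕ)
  have hdinj : Function.Injective d := fun i i' h => e.injective (Subtype.ext h)
  have hd : ∀ i, ∑ j, d i j = n := fun i => (e i).2
  have hsurj : ∀ m : Fin g → ℕ, (∑ j, m j = n) → ∃ i, d i = m := fun m hm =>
    ⟨e.symm ⟨m, hm⟩, by simp [d]⟩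
  have hsym : ∀ a b : Fin g, ∑ i, d i a = ∑ i, d i b := by
    intro a b
    have hF : ∀ p : {d : Fin g → ℕ // ∑ j, d j = n}, ∑ j, p.1 (Equiv.swap a b j) = n :=
      fun p => (Equiv.sum_comp (Equiv.swap a b) p.1).trans p.2
    let F : {d : Fin g → ℕ // ∑ j, d j = n} ≃ {d : Fin g → ℕ // ∑ j, d j = n} :=
      { toFun := fun p => ⟨fun j => p.1 (Equiv.swap a b j), hF p⟩
        invFun := fun p => ⟨fun j => p.1 (Equiv.swap a b j), hF p⟩
        left_inv := fun p => Subtype.ext (by funext j; simp)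
        right_inv := fun p => Subtype.ext (by funext j; simp) }
    let τ := e.trans (F.trans e.symm)
    have h1 : ∀ i, d (τ i) = fun j => d i (Equiv.swap a b j) := by
      intro i
      show ((e (e.symm (F (e i)))) : Fin g → ℕ) = _
      rw [Equiv.apply_symm_apply]
      rfl
    calc ∑ i, d i a = ∑ i, d (τ i) a := (Equiv.sum_comp τ (fun i => d i a)).symm
      _ = ∑ i, d i (Equiv.swap a b a) := by
          refine Finset.sum_congr rfl fun i _ => ?_
          rw [h1 i]
      _ = ∑ i, d i b := by rw [Equiv.swap_apply_left]
  have hS : ∀ a, ∑ i, d i a = (g + n - 1).choose (n - 1) := by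
    intro a
    have hgmul : g * (∑ i, d i a) = (g + n - 1).choose n * n := by
      have h2 : ∑ b : Fin g, ∑ i, d i b = g * ∑ i, d i a := by
        rw [Finset.sum_congr rfl fun b _ => hsym b a, Finset.sum_const,
          Finset.card_univ, Fintype.card_fin, smul_eq_mul]
      rw [← h2, Finset.sum_comm]
      rw [Finset.sum_congr rfl fun i (_ : i ∈ Finset.univ) => hd i, Finset.sum_const,
        Finset.card_univ, Fintype.card_fin, smul_eq_mul]
    have hkb := Stmt2d.key_binom g n hg hn
    have hfin : g * (∑ i, d i a) = g * (g + n - 1).choose (n - 1) := by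
      rw [hgmul, hkb]; ring
    exact Nat.eq_of_mul_eq_mul_left (by omega) hfin
  have hrew1 : (fun i : Fin ((g + n - 1).choose n) =>
        ∏ j, (∑ k, A j k • (X k : MvPolynomial (Fin g) ℂ)) ^ ((e i : Fin g → ℕ) j))
      = fun i => ∑ i', Stmt2c.Φ d A i i' • Stmt2c.uu d i' := by
    funext i
    rw [← Stmt2c.expansion (n := n) A d hdinj hd hsurj i]
    exact (Stmt2c.sigma_uu A d i).symm
  have hrew2 : (fun i : Fin ((g + n - 1).choose n) => ∏ j, (X j : MvPolynomial (Fin g) ℂ) ^ ((e i : Fin g → ℕ) j))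
      = Stmt2c.uu d := by
    funext i
    exact (Stmt2c.uu_eq_prod d i).symm
  rw [hrew1, hrew2,
    Stmt2b.alt_comb (ExteriorAlgebra.ιMulti ℂ ((g + n - 1).choose n)) (Stmt2c.Φ d A) (Stmt2c.uu d),
    Stmt2c.det_phi (n := n) A d hdinj hd hsurj hS]
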